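/- Let K be a field, V a K-vector space, W₁, W₂ subspaces of V, and φ a linear automorphism of V. Then the dimension (as a cardinal) of V / ((W₁ ∩ φ(W₁)) + (W₂ ∩ φ(W₂))) equals the dimension of V / ((W₁ ∩ φ⁻¹(W₁)) + (W₂ ∩ φ⁻¹(W₂))). -/

import Mathlib

open Cardinal

/-- The homology length function: for subspaces `W₁, W₂` of `V` and a linear
automorphism `φ` of `V`, `homNorm W₁ W₂ φ` is the codimension (as a cardinal) in
`V` of the subspace `(W₁ ∩ φ(W₁)) + (W₂ ∩ φ(W₂))`. -/
noncomputable def homNorm {K V : Type*} [Field K] [AddCommGroup V] [Module K V]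
    (W₁ W₂ : Submodule K V) (φ : V ≃ₗ[K] V) : Cardinal :=
  Module.rank K
    (V ⧸ ((W₁ ⊓ Submodule.map (φ : V →ₗ[K] V) W₁)
          ⊔ (W₂ ⊓ Submodule.map (φ : V →ₗ[K] V) W₂)))

/-- Symmetry of the homology length function: `‖φ‖ = ‖φ⁻¹‖`, i.e. the dimension
of `V / ((W₁ ∩ φ(W₁)) + (W₂ ∩ φ(W₂)))` equals the dimension of
`V / ((W₁ ∩ φ⁻¹(W₁)) + (W₂ ∩ φ⁻¹(W₂)))`. -/
theorem stmt10 {K V : Type*} [Field K] [AddCommGroup V] [Module K V]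
    (W₁ W₂ : Submodule K V) (φ : V ≃ₗ[K] V) :
    homNorm W₁ W₂ φ = homNorm W₁ W₂ φ.symm := by
  unfold homNorm
  refine LinearEquiv.rank_eq (Submodule.Quotient.equiv _ _ φ.symm ?_)
  rw [Submodule.map_sup, Submodule.map_inf _ φ.symm.injective,
    Submodule.map_inf _ φ.symm.injective]
  have h : ∀ X : Submodule K V, Submodule.map (σ₁₂ := RingHom.id K) φ.symm X = Submodule.map (φ.symm : V →ₗ[K] V) X :=
    fun X => rfl
  rw [h, h, h, h, ← Submodule.map_comp, ← Submodule.map_comp]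
  have h2 : (φ.symm : V →ₗ[K] V).comp (φ : V →ₗ[K] V) = LinearMap.id := by ext x; simp
  rw [h2]
  simp [Submodule.map_id, inf_comm]
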